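/- Let M be a type, f : M → M, w : M → ℂ. Suppose x ∈ M is a periodic point of f of order n, that w(f^[k](x)) ≠ 0 for every 0 ≤ k ≤ n−1, and that λ ∈ ℂ satisfies λ^n = ∏_{k=0}^{n−1} w(f^[k](x)). Then λ ≠ 0 and λ is an eigenvalue of the weighted pushforward operator T_{w,f} on M →₀ ℂ: the element γ = Σ_{i=0}^{n−1} a_i·δ_{f^[i](x)}, where a_0 = 1 and a_{i+1} = λ^{−1}·w(f^[i](x))·a_i for 0 ≤ i ≤ n−2, is nonzero and satisfies T_{w,f}(γ) = λ·γ. -/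

import Mathlib

noncomputable def weightedPushforward {M : Type*} (w : M → ℂ) (f : M → M) :
    (M →₀ ℂ) →ₗ[ℂ] (M →₀ ℂ) :=
  Finsupp.lsum ℂ (fun x => w x • Finsupp.lsingle (f x))

theorem stmt0 {M : Type*} (f : M → M) (w : M → ℂ) (x : M) (n : ℕ)
    (hn : 1 ≤ n) (hper : f^[n] x = x) (hmin : ∀ k, 1 ≤ k → k < n → f^[k] x ≠ x)
    (hw : ∀ k, k ≤ n - 1 → w (f^[k] x) ≠ 0)
    (lam : ℂ) (hlam : lam ^ n = ∏ k ∈ Finset.range n, w (f^[k] x))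
    (a : ℕ → ℂ) (ha0 : a 0 = 1)
    (harec : ∀ i, i ≤ n - 2 → a (i + 1) = lam⁻¹ * w (f^[i] x) * a i) :
    lam ≠ 0 ∧
      (∑ i ∈ Finset.range n, Finsupp.single (f^[i] x) (a i)) ≠ 0 ∧
      weightedPushforward w f (∑ i ∈ Finset.range n, Finsupp.single (f^[i] x) (a i)) =
        lam • (∑ i ∈ Finset.range n, Finsupp.single (f^[i] x) (a i)) := by
  obtain ⟨m, rfl⟩ : ∃ m, n = m + 1 := ⟨n - 1, (Nat.succ_pred_eq_of_pos hn).symm⟩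
  have hprod : ∏ k ∈ Finset.range (m + 1), w (f^[k] x) ≠ 0 :=
    Finset.prod_ne_zero_iff.2 fun k hk =>
      hw k (by simp at hk; omega)
  have hlam0 : lam ≠ 0 := by
    intro h
    rw [h, zero_pow (by omega)] at hlam
    exact hprod hlam.symm
  have ha : ∀ i, i ≤ m → a i = lam⁻¹ ^ i * ∏ k ∈ Finset.range i, w (f^[k] x) := by
    intro i
    induction i with
    | zero => simp [ha0]
    | succ j ih =>
      intro hj
      rw [harec j (by omega), ih (by omega), Finset.prod_range_succ, pow_succ]
      ring
  have hlast : w (f^[m] x) * a m = lam * a 0 := by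
    rw [ha0, mul_one, ha m le_rfl]
    have h1 : w (f^[m] x) * (lam⁻¹ ^ m * ∏ k ∈ Finset.range m, w (f^[k] x))
        = lam⁻¹ ^ m * ∏ k ∈ Finset.range (m + 1), w (f^[k] x) := by
      rw [Finset.prod_range_succ]; ring
    rw [h1, ← hlam, pow_succ]
    field_simp
    rw [← mul_pow, one_div, inv_mul_cancel₀ hlam0, one_pow]
  refine ⟨hlam0, ?_, ?_⟩
  · intro h
    have hx := DFunLike.congr_fun h x
    simp only [Finsupp.coe_zero, Pi.zero_apply, Finsupp.finset_sum_apply,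
      Finsupp.single_apply] at hx
    rw [Finset.sum_eq_single 0 ?_ ?_] at hx
    · simp [ha0] at hx
    · intro i hi hi0
      exact Finsupp.single_eq_of_ne (hmin i (by omega) (by simp at hi; omega)).symm
    · simp
  · have hT : weightedPushforward w f
        (∑ i ∈ Finset.range (m + 1), Finsupp.single (f^[i] x) (a i))
        = ∑ i ∈ Finset.range (m + 1), Finsupp.single (f^[i + 1] x) (w (f^[i] x) * a i) := by
      rw [map_sum]
      refine Finset.sum_congr rfl fun i _ => ?_
      simp [weightedPushforward, Finsupp.smul_single, Function.iterate_succ_apply',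
        smul_eq_mul]
    rw [hT, Finset.smul_sum]
    rw [Finset.sum_range_succ]
    conv_rhs => rw [Finset.sum_range_succ']
    congr 1
    · refine Finset.sum_congr rfl fun i hi => ?_
      rw [Finsupp.smul_single, smul_eq_mul, harec i (by simp at hi; omega)]
      field_simp
    · rw [Function.iterate_succ_apply'] at hper ⊢
      rw [hper, Finsupp.smul_single, smul_eq_mul, Function.iterate_zero_apply, hlast]
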